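/- The operation of incrementing the smallest part by 1 is an injection from the set of Second-Kind partitions of n into the set of partitions of n+1, and its image is exactly the set of partitions of n+1 whose smallest part is at least 2. -/

import Mathlib

open Multiset

/-- `s` is the smallest part of the partition `p`. -/
def IsSmallest {n : ℕ} (s : ℕ) (p : Nat.Partition n) : Prop :=
  s ∈ p.parts ∧ ∀ x ∈ p.parts, s ≤ x

/-- A partition is of the "Second Kind" if it has exactly one part or its smallest part is
strictly less than every other part, i.e. its smallest part occurs exactly once. -/
def SecondKind {n : ℕ} (p : Nat.Partition n) : Prop :=
  ∃ s, IsSmallest s p ∧ p.parts.count s = 1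

/-- Second kind for the second method: the number ℵ of unit parts satisfies
`1 ≤ ℵ < m` where `m` is the smallest part greater than 1. -/
def SecondKind2 {n : ℕ} (p : Nat.Partition n) : Prop :=
  ∃ m ∈ p.parts, 1 < m ∧ (∀ x ∈ p.parts, 1 < x → m ≤ x) ∧
    1 ≤ p.parts.count 1 ∧ p.parts.count 1 < m

/-- A partition is of the "First Kind" if it has at least two parts and its two smallest
parts are equal, i.e. its smallest part occurs at least twice. -/
def FirstKind {n : ℕ} (p : Nat.Partition n) : Prop :=
  ∃ s, IsSmallest s p ∧ 2 ≤ p.parts.count s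

lemma exists_min_multiset (m : Multiset ℕ) (h : m ≠ 0) : ∃ a ∈ m, ∀ b ∈ m, a ≤ b := by
  have hne : m.toFinset.Nonempty := by
    rcases exists_mem_of_ne_zero h with ⟨a, ha⟩
    exact ⟨a, Multiset.mem_toFinset.2 ha⟩
  refine ⟨m.toFinset.min' hne, Multiset.mem_toFinset.1 (m.toFinset.min'_mem hne), ?_⟩
  intro b hb
  exact m.toFinset.min'_le b (Multiset.mem_toFinset.2 hb)

lemma erase_gt {n : ℕ} (p : Nat.Partition n) (s : ℕ) (hs : IsSmallest s p)
    (hc : p.parts.count s = 1) : ∀ x ∈ p.parts.erase s, s + 1 ≤ x := by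
  intro x hx
  have hxm : x ∈ p.parts := mem_of_mem_erase hx
  have hle := hs.2 x hxm
  rcases eq_or_lt_of_le hle with h | h
  · exfalso
    have h0 : count s (p.parts.erase s) = 0 := by
      rw [count_erase_self, hc]
    rw [← h] at hx
    rw [← count_pos, h0] at hx
    omega
  · omega

lemma smallest_unique {n : ℕ} {p : Nat.Partition n} {s t : ℕ}
    (hs : IsSmallest s p) (ht : IsSmallest t p) : s = t :=
  le_antisymm (hs.2 t ht.1) (ht.2 s hs.1)

theorem stmt3 (n : ℕ) :
    (∀ p : Nat.Partition n, SecondKind p → ∀ s, IsSmallest s p →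
        ∃ α : Nat.Partition (n + 1), α.parts = (s + 1) ::ₘ p.parts.erase s) ∧
    (∀ p q : Nat.Partition n, SecondKind p → SecondKind q →
        ∀ s t, IsSmallest s p → IsSmallest t q →
        (s + 1) ::ₘ p.parts.erase s = (t + 1) ::ₘ q.parts.erase t → p = q) ∧
    (∀ α : Nat.Partition (n + 1),
        (∀ x ∈ α.parts, 2 ≤ x) ↔
          ∃ p : Nat.Partition n, SecondKind p ∧ ∃ s, IsSmallest s p ∧
            α.parts = (s + 1) ::ₘ p.parts.erase s) := by
  refine ⟨?_, ?_, ?_⟩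
  · intro p hp s hs
    have hsum : s + (p.parts.erase s).sum = n := by
      have h1 : (s ::ₘ p.parts.erase s).sum = n := by
        rw [cons_erase hs.1]; exact p.parts_sum
      simpa [sum_cons] using h1
    refine ⟨⟨(s + 1) ::ₘ p.parts.erase s, ?_, ?_⟩, rfl⟩
    · intro i hi
      rw [mem_cons] at hi
      rcases hi with rfl | hi
      · omega
      · exact p.parts_pos (mem_of_mem_erase hi)
    · rw [sum_cons]; omega
  · intro p q hp hq s t hsp htq heq
    obtain ⟨s', hs', hcs'⟩ := hp
    obtain ⟨t', ht', hct'⟩ := hq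
    have hcs : p.parts.count s = 1 := smallest_unique hs' hsp ▸ hcs'
    have hct : q.parts.count t = 1 := smallest_unique ht' htq ▸ hct'
    have hps : ∀ x ∈ (s + 1) ::ₘ p.parts.erase s, s + 1 ≤ x := by
      intro x hx
      rw [mem_cons] at hx
      rcases hx with rfl | hx
      · exact le_refl _
      · exact erase_gt p s hsp hcs x hx
    have hqt : ∀ x ∈ (t + 1) ::ₘ q.parts.erase t, t + 1 ≤ x := by
      intro x hx
      rw [mem_cons] at hx
      rcases hx with rfl | hx
      · exact le_refl _
      · exact erase_gt q t htq hct x hx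
    have hst : s = t := by
      have h1 : (s + 1 : ℕ) ∈ (t + 1) ::ₘ q.parts.erase t := heq ▸ mem_cons_self _ _
      have h2 : (t + 1 : ℕ) ∈ (s + 1) ::ₘ p.parts.erase s := heq ▸ mem_cons_self _ _
      have := hqt _ h1
      have := hps _ h2
      omega
    subst hst
    have herase : p.parts.erase s = q.parts.erase s := (cons_inj_right _).1 heq
    have hparts : p.parts = q.parts := by
      rw [← cons_erase hsp.1, ← cons_erase htq.1, herase]
    cases p; cases q; simp_all
  · intro α
    constructor
    · intro hall
      have hne : α.parts ≠ 0 := by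
        intro h
        have hs := α.parts_sum
        rw [h] at hs
        simp at hs
      obtain ⟨a, ham, hamin⟩ := exists_min_multiset α.parts hne
      have ha2 : 2 ≤ a := hall a ham
      have hsum : a + (α.parts.erase a).sum = n + 1 := by
        have h1 : (a ::ₘ α.parts.erase a).sum = n + 1 := by
          rw [cons_erase ham]; exact α.parts_sum
        simpa [sum_cons] using h1
      have hnotmem : (a - 1) ∉ α.parts.erase a := by
        intro hmem
        have := hamin _ (mem_of_mem_erase hmem)
        omega
      refine ⟨⟨(a - 1) ::ₘ α.parts.erase a, ?_, ?_⟩, ?_, a - 1, ?_, ?_⟩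
      · intro i hi
        rw [mem_cons] at hi
        rcases hi with rfl | hi
        · omega
        · exact α.parts_pos (mem_of_mem_erase hi)
      · rw [sum_cons]; omega
      · refine ⟨a - 1, ⟨mem_cons_self _ _, ?_⟩, ?_⟩
        · intro x hx
          rw [mem_cons] at hx
          rcases hx with rfl | hx
          · exact le_refl _
          · have := hamin _ (mem_of_mem_erase hx); omega
        · simp [count_cons_self, count_eq_zero_of_notMem hnotmem]
      · refine ⟨mem_cons_self _ _, ?_⟩
        intro x hx
        rw [mem_cons] at hx
        rcases hx with rfl | hx
        · exact le_refl _
        · have := hamin _ (mem_of_mem_erase hx); omega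
      · show α.parts = (a - 1 + 1) ::ₘ ((a - 1) ::ₘ α.parts.erase a).erase (a - 1)
        rw [erase_cons_head]
        have : a - 1 + 1 = a := by omega
        rw [this, cons_erase ham]
    · rintro ⟨p, hp, s, hs, heq⟩
      obtain ⟨s', hs', hcs'⟩ := hp
      have hcs : p.parts.count s = 1 := smallest_unique hs' hs ▸ hcs'
      have hs1 : 1 ≤ s := p.parts_pos hs.1
      intro x hx
      rw [heq, mem_cons] at hx
      rcases hx with rfl | hx
      · omega
      · have := erase_gt p s hs hcs x hx; omega
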